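/- Let A ⊆ ℝ, let a ∈ A, and suppose there is a surjective isometry f : ℝ → ℝ such that f(A) = A \ {a}. Then A is not a good set: there exists B ⊆ ℝ with A ≤ B and B ≤ A but no surjective isometry g : ℝ → ℝ with g(A) = B. -/
import Mathlib


open Set Function

/-- Geometric equality on the real line: some surjective isometry maps `S₁` onto `S₂`. -/
def GeomEqR (S₁ S₂ : Set ℝ) : Prop :=
  ∃ f : ℝ → ℝ, Isometry f ∧ Function.Surjective f ∧ f '' S₁ = S₂

/-- `S₁` is equal to or smaller than `S₂`: some surjective isometry maps `S₁` into `S₂`. -/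
def GeomLeR (S₁ S₂ : Set ℝ) : Prop :=
  ∃ f : ℝ → ℝ, Isometry f ∧ Function.Surjective f ∧ f '' S₁ ⊆ S₂

/-- A figure is good if `A ≤ B` and `B ≤ A` imply `A ≈ B` for every figure `B`. -/
def IsGoodR (A : Set ℝ) : Prop :=
  ∀ B : Set ℝ, GeomLeR A B → GeomLeR B A → GeomEqR A B

/-- Every isometry of the real line is `x ↦ f 0 + x` or `x ↦ f 0 - x`. -/
lemma isometry_real_cases (f : ℝ → ℝ) (hf : Isometry f) :
    (∀ x, f x = f 0 + x) ∨ (∀ x, f x = f 0 - x) := by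
  have key : ∀ x y : ℝ, (f x - f y) ^ 2 = (x - y) ^ 2 := by
    intro x y
    have h := hf.dist_eq x y
    rw [Real.dist_eq, Real.dist_eq] at h
    have := congrArg (· ^ 2) h
    simpa [sq_abs] using this
  have h1 : (f 1 - f 0 - 1) * (f 1 - f 0 + 1) = 0 := by
    have := key 1 0
    nlinarith [this]
  rcases mul_eq_zero.mp h1 with h | h
  · left
    intro x
    have k1 := key x 0
    have k2 := key x 1
    nlinarith [k1, k2, h]
  · right
    intro x
    have k1 := key x 0
    have k2 := key x 1
    nlinarith [k1, k2, h]

/-- If the isometry in the hypothesis is a reflection and maps `S` onto `S \ {b}` with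
`b ∈ S`, we get a contradiction. -/
lemma refl_case_absurd (S : Set ℝ) (b : ℝ) (hb : b ∈ S) (f : ℝ → ℝ)
    (hc : ∀ x, f x = f 0 - x) (hfS : f '' S = S \ {b}) : False := by
  have hff : ∀ x, f (f x) = x := by
    intro x
    rw [hc (f x), hc x]; ring
  have h1 : f b ∈ S \ {b} := hfS ▸ mem_image_of_mem f hb
  have h2 : f (f b) ∈ S \ {b} := hfS ▸ mem_image_of_mem f h1.1
  rw [hff] at h2
  exact h2.2 rfl

/-- Pointwise description of `f '' S = S \ {b}` when `f` is the translation by `c = f 0`. -/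
lemma trans_case_iff (S : Set ℝ) (b : ℝ) (f : ℝ → ℝ)
    (hc : ∀ x, f x = f 0 + x) (hfS : f '' S = S \ {b}) :
    ∀ y : ℝ, (y ∈ S ∧ y ≠ b) ↔ y - f 0 ∈ S := by
  intro y
  constructor
  · rintro ⟨hyS, hy⟩
    have hmem : y ∈ f '' S := by
      rw [hfS]; exact ⟨hyS, hy⟩
    obtain ⟨x, hx, hfx⟩ := hmem
    have hx' : x = y - f 0 := by
      rw [hc x] at hfx; linarith
    rwa [← hx']
  · intro h
    have hmem : f (y - f 0) ∈ f '' S := mem_image_of_mem f h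
    rw [hfS] at hmem
    have he : f (y - f 0) = y := by rw [hc]; ring
    rw [he] at hmem
    exact ⟨hmem.1, hmem.2⟩

theorem not_good_of_geomEq_diff_singleton (A : Set ℝ) (a : ℝ) (ha : a ∈ A)
    (f : ℝ → ℝ) (hf : Isometry f) (hfs : Function.Surjective f)
    (hfA : f '' A = A \ {a}) :
    ∃ B : Set ℝ, GeomLeR A B ∧ GeomLeR B A ∧
      ¬ ∃ g : ℝ → ℝ, Isometry g ∧ Function.Surjective g ∧ g '' A = B := by
  -- `f` must be a translation
  rcases isometry_real_cases f hf with hc | hc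
  swap
  · exact absurd (refl_case_absurd A a ha f hc hfA) (fun h => h)
  set c : ℝ := f 0 with hcdef
  have P1 : ∀ y : ℝ, (y ∈ A ∧ y ≠ a) ↔ y - c ∈ A := trans_case_iff A a f hc hfA
  -- `a + c ∈ A` and `c ≠ 0`
  obtain ⟨hac, hne⟩ : a + c ∈ A ∧ a + c ≠ a := (P1 (a + c)).mpr (by simpa using ha)
  have hc0 : c ≠ 0 := fun h => hne (by rw [h, add_zero])
  refine ⟨A \ {a + c}, ?_, ?_, ?_⟩
  · -- A ≤ B via translation by 2c
    refine ⟨fun x => x + 2 * c, ?_, fun y => ⟨y - 2 * c, by ring⟩, ?_⟩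
    · apply Isometry.of_dist_eq
      intro x y
      rw [Real.dist_eq, Real.dist_eq]
      congr 1; ring
    · rintro _ ⟨x, hx, rfl⟩
      have h1 : x + c ∈ A ∧ x + c ≠ a := (P1 (x + c)).mpr (by simpa using hx)
      have hmem : x + 2 * c - c ∈ A := by
        have he : x + 2 * c - c = x + c := by ring
        rw [he]; exact h1.1
      have h2 : x + 2 * c ∈ A ∧ x + 2 * c ≠ a := (P1 (x + 2 * c)).mpr hmem
      refine ⟨h2.1, ?_⟩
      intro hmem
      apply h1.2
      have : x + 2 * c = a + c := hmem
      linarith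
  · -- B ≤ A via the identity
    exact ⟨id, isometry_id, surjective_id, by simp⟩
  · -- No surjective isometry maps A onto B
    rintro ⟨g, hg, hgs, hgA⟩
    rcases isometry_real_cases g hg with hgc | hgc
    swap
    · exact refl_case_absurd A (a + c) hac g hgc hgA
    set d : ℝ := g 0 with hddef
    have P2 : ∀ y : ℝ, (y ∈ A ∧ y ≠ a + c) ↔ y - d ∈ A := trans_case_iff A (a + c) g hgc hgA
    by_cases hd0 : d = 0
    · -- then A = A \ {a+c}, contradicting a+c ∈ A
      have := (P2 (a + c)).mpr (by rw [hd0, sub_zero]; exact hac)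
      exact this.2 rfl
    · -- chain: a - d ∈ A, then a - d - c ∈ A, then a - c ∈ A, then a ≠ a
      have s1 : a - d ∈ A := (P2 a).mp ⟨ha, fun h => hc0 (by linarith)⟩
      have s2 : a - d - c ∈ A := (P1 (a - d)).mp ⟨s1, fun h => hd0 (by linarith)⟩
      have s3 : a - c ∈ A := by
        have he : a - c - d = a - d - c := by ring
        exact ((P2 (a - c)).mpr (by rw [he]; exact s2)).1
      have s4 : a ∈ A ∧ a ≠ a := (P1 a).mpr s3
      exact s4.2 rfl
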